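/- Within-epoch deviation bound for the incremental gradient method: suppose each $f_i$ is $L_i$-smooth with $L_{\max} = \max_i L_i$, and the iterates satisfy $x_{j+1} = x_j - \eta \nabla f_{j+1}(x_j)$ for $j = 0,\ldots,n-1$ starting from $x_0$. If $\eta \leq \frac{1}{\sqrt{2} n L_{\max}}$, then $\sum_{i=0}^{n-1}\|x_i - x_0\|^2 \leq 2\eta^2 n^3 \cdot \frac{1}{n}\sum_{i=0}^{n-1}\|\nabla f_{i+1}(x_0)\|^2$. -/

import Mathlib

noncomputable section

/-- Within-epoch deviation bound for the incremental gradient method: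
with step size `η ≤ 1/(√2 n L_max)`, the sum of squared deviations from the
epoch's starting point is controlled by the gradients at the starting point. -/
theorem ig_deviation_bound
    (d n : ℕ) (hn : 0 < n)
    (f : Fin n → EuclideanSpace ℝ (Fin d) → ℝ)
    (hdiff : ∀ i, Differentiable ℝ (f i))
    (Lmax : ℝ) (hLmax : 0 < Lmax)
    (hsmooth_i : ∀ i, ∀ x y : EuclideanSpace ℝ (Fin d),
      ‖gradient (f i) x - gradient (f i) y‖ ≤ Lmax * ‖x - y‖)
    (η : ℝ) (hη0 : 0 < η) (hη : η ≤ 1 / (Real.sqrt 2 * n * Lmax))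
    (x : ℕ → EuclideanSpace ℝ (Fin d))
    (hstep : ∀ j (h : j < n), x (j + 1) = x j - η • gradient (f ⟨j, h⟩) (x j)) :
    ∑ i ∈ Finset.range n, ‖x i - x 0‖ ^ 2
      ≤ 2 * η ^ 2 * n ^ 3 * ((n : ℝ)⁻¹ * ∑ i : Fin n, ‖gradient (f i) (x 0)‖ ^ 2) := by
  classical
  set a : ℕ → ℝ := fun j => ‖x j - x 0‖ with ha
  set c : ℕ → ℝ := fun j => if h : j < n then ‖gradient (f ⟨j, h⟩) (x 0)‖ else 0 with hc
  have hcnonneg : ∀ j, 0 ≤ c j := by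
    intro j; simp only [hc]; split <;> positivity
  have hanonneg : ∀ j, 0 ≤ a j := fun j => norm_nonneg _
  -- Step 1: recursive bound
  have key : ∀ i, i ≤ n → a i ≤ η * ∑ j ∈ Finset.range i, (Lmax * a j + c j) := by
    intro i
    induction i with
    | zero => intro _; simp [ha]
    | succ i ih =>
      intro hi
      have hin : i < n := hi
      have ih' := ih (le_of_lt hin)
      have hx : x (i + 1) - x 0 = (x i - x 0) - η • gradient (f ⟨i, hin⟩) (x i) := by
        rw [hstep i hin]; abel
      have h1 : a (i + 1) ≤ a i + η * ‖gradient (f ⟨i, hin⟩) (x i)‖ := by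
        rw [ha]; simp only; rw [hx]
        refine (norm_sub_le _ _).trans ?_
        rw [norm_smul, Real.norm_eq_abs, abs_of_pos hη0]
      have h2 : ‖gradient (f ⟨i, hin⟩) (x i)‖ ≤ Lmax * a i + c i := by
        have := norm_sub_norm_le (gradient (f ⟨i, hin⟩) (x i)) (gradient (f ⟨i, hin⟩) (x 0))
        have hs := hsmooth_i ⟨i, hin⟩ (x i) (x 0)
        have : c i = ‖gradient (f ⟨i, hin⟩) (x 0)‖ := by simp [hc, hin]
        calc ‖gradient (f ⟨i, hin⟩) (x i)‖
            = ‖(gradient (f ⟨i, hin⟩) (x i) - gradient (f ⟨i, hin⟩) (x 0))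
                + gradient (f ⟨i, hin⟩) (x 0)‖ := by rw [sub_add_cancel]
          _ ≤ ‖gradient (f ⟨i, hin⟩) (x i) - gradient (f ⟨i, hin⟩) (x 0)‖
              + ‖gradient (f ⟨i, hin⟩) (x 0)‖ := norm_add_le _ _
          _ ≤ Lmax * a i + c i := by rw [this]; exact add_le_add hs (le_refl _)
      rw [Finset.sum_range_succ, mul_add]
      calc a (i+1) ≤ a i + η * ‖gradient (f ⟨i, hin⟩) (x i)‖ := h1
        _ ≤ η * ∑ j ∈ Finset.range i, (Lmax * a j + c j) + η * (Lmax * a i + c i) := by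
            refine add_le_add ih' ?_
            exact mul_le_mul_of_nonneg_left h2 hη0.le
  set S : ℝ := ∑ j ∈ Finset.range n, a j ^ 2 with hS
  set C : ℝ := ∑ j ∈ Finset.range n, c j ^ 2 with hCdef
  have hSnonneg : 0 ≤ S := Finset.sum_nonneg fun j _ => sq_nonneg _
  have hCnonneg : 0 ≤ C := Finset.sum_nonneg fun j _ => sq_nonneg _
  -- Step 2: squared bound for each i < n
  have key2 : ∀ i, i ≤ n → a i ^ 2 ≤ η ^ 2 * i * (2 * Lmax ^ 2 * S + 2 * C) := by
    intro i hi
    have h1 : a i ^ 2 ≤ (η * ∑ j ∈ Finset.range i, (Lmax * a j + c j)) ^ 2 :=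
      pow_le_pow_left₀ (hanonneg i) (key i hi) 2
    have h2 : (∑ j ∈ Finset.range i, (Lmax * a j + c j)) ^ 2
        ≤ i * ∑ j ∈ Finset.range i, (Lmax * a j + c j) ^ 2 := by
      have := sq_sum_le_card_mul_sum_sq (s := Finset.range i)
        (f := fun j => Lmax * a j + c j)
      simpa using this
    have h3 : ∑ j ∈ Finset.range i, (Lmax * a j + c j) ^ 2
        ≤ 2 * Lmax ^ 2 * S + 2 * C := by
      have hsub : ∑ j ∈ Finset.range i, (Lmax * a j + c j) ^ 2
          ≤ ∑ j ∈ Finset.range n, (Lmax * a j + c j) ^ 2 :=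
        Finset.sum_le_sum_of_subset_of_nonneg
          (Finset.range_subset_range.mpr hi) (fun j _ _ => sq_nonneg _)
      refine hsub.trans ?_
      rw [hS, hCdef, Finset.mul_sum, Finset.mul_sum, ← Finset.sum_add_distrib]
      refine Finset.sum_le_sum fun j _ => ?_
      nlinarith [sq_nonneg (Lmax * a j - c j)]
    calc a i ^ 2 ≤ (η * ∑ j ∈ Finset.range i, (Lmax * a j + c j)) ^ 2 := h1
      _ = η ^ 2 * (∑ j ∈ Finset.range i, (Lmax * a j + c j)) ^ 2 := by ring
      _ ≤ η ^ 2 * (i * ∑ j ∈ Finset.range i, (Lmax * a j + c j) ^ 2) := by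
          exact mul_le_mul_of_nonneg_left h2 (by positivity)
      _ ≤ η ^ 2 * (i * (2 * Lmax ^ 2 * S + 2 * C)) := by
          refine mul_le_mul_of_nonneg_left ?_ (by positivity)
          exact mul_le_mul_of_nonneg_left h3 (by positivity)
      _ = η ^ 2 * i * (2 * Lmax ^ 2 * S + 2 * C) := by ring
  -- Step 3: sum over i
  have hsum_i : (∑ i ∈ Finset.range n, (i : ℝ)) ≤ (n : ℝ) ^ 2 / 2 := by
    have h : (∑ i ∈ Finset.range n, i) * 2 ≤ n * n := by
      rw [Finset.sum_range_id_mul_two]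
      exact Nat.mul_le_mul_left n (Nat.sub_le n 1)
    have h2 : ((∑ i ∈ Finset.range n, i : ℕ) : ℝ) * 2 ≤ (n : ℝ) * n := by
      exact_mod_cast h
    push_cast at h2
    nlinarith
  have hSbound : S ≤ η ^ 2 * (n : ℝ) ^ 2 * (Lmax ^ 2 * S + C) := by
    have : S ≤ ∑ i ∈ Finset.range n, η ^ 2 * i * (2 * Lmax ^ 2 * S + 2 * C) :=
      Finset.sum_le_sum fun i hi => key2 i (le_of_lt (Finset.mem_range.mp hi))
    have heq : ∑ i ∈ Finset.range n, η ^ 2 * (i : ℝ) * (2 * Lmax ^ 2 * S + 2 * C)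
        = (∑ i ∈ Finset.range n, (i : ℝ)) * (η ^ 2 * (2 * Lmax ^ 2 * S + 2 * C)) := by
      rw [Finset.sum_mul]; refine Finset.sum_congr rfl fun i _ => by ring
    rw [heq] at this
    have h2 : (∑ i ∈ Finset.range n, (i : ℝ)) * (η ^ 2 * (2 * Lmax ^ 2 * S + 2 * C))
        ≤ ((n : ℝ) ^ 2 / 2) * (η ^ 2 * (2 * Lmax ^ 2 * S + 2 * C)) := by
      refine mul_le_mul_of_nonneg_right hsum_i (by positivity)
    calc S ≤ _ := this
      _ ≤ ((n : ℝ) ^ 2 / 2) * (η ^ 2 * (2 * Lmax ^ 2 * S + 2 * C)) := h2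
      _ = η ^ 2 * (n : ℝ) ^ 2 * (Lmax ^ 2 * S + C) := by ring
  -- Step 4: η² n² L² ≤ 1/2
  have hnpos : (0 : ℝ) < n := Nat.cast_pos.mpr hn
  have hstep4 : η ^ 2 * (n : ℝ) ^ 2 * Lmax ^ 2 ≤ 1 / 2 := by
    have hpos : 0 < Real.sqrt 2 * n * Lmax := by
      have := Real.sqrt_pos.mpr (by norm_num : (0:ℝ) < 2)
      positivity
    have h1 : η * (Real.sqrt 2 * n * Lmax) ≤ 1 := by
      rw [← le_div_iff₀ hpos]; exact hη.trans_eq (by rw [one_div])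
    have h2 : (η * (Real.sqrt 2 * n * Lmax)) ^ 2 ≤ 1 := by
      nlinarith [mul_pos hη0 hpos]
    have hs2 : Real.sqrt 2 ^ 2 = 2 := Real.sq_sqrt (by norm_num)
    nlinarith [h2, hs2]
  -- Step 5: conclude S ≤ 2 η² n² C
  have hfinal : S ≤ 2 * η ^ 2 * (n : ℝ) ^ 2 * C := by
    have h1 : η ^ 2 * (n : ℝ) ^ 2 * (Lmax ^ 2 * S) ≤ (1/2) * S := by
      have := mul_le_mul_of_nonneg_right hstep4 hSnonneg
      calc η ^ 2 * (n : ℝ) ^ 2 * (Lmax ^ 2 * S)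
          = (η ^ 2 * (n : ℝ) ^ 2 * Lmax ^ 2) * S := by ring
        _ ≤ (1/2) * S := this
    have h2 : η ^ 2 * (n:ℝ) ^ 2 * C ≤ η ^ 2 * (n:ℝ)^2 * C := le_refl _
    nlinarith [hSbound]
  -- Step 6: rewrite goal
  have hCeq : (∑ i : Fin n, ‖gradient (f i) (x 0)‖ ^ 2) = C := by
    rw [hCdef]
    rw [← Fin.sum_univ_eq_sum_range (fun j => c j ^ 2) n]
    refine Finset.sum_congr rfl fun i _ => ?_
    simp [hc, i.isLt, Fin.eta]
  rw [hCeq]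
  have hrhs : 2 * η ^ 2 * (n:ℝ) ^ 3 * ((n : ℝ)⁻¹ * C) = 2 * η ^ 2 * (n : ℝ) ^ 2 * C := by
    field_simp
  rw [hrhs]
  exact hfinal
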